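/- Let p be prime and let v, w be nonzero elements of ℤ/p. Suppose x, y are positive coprime integers with x, y > 1, x ≤ ℓ, y ≤ m, and xv = yw in ℤ/p. Let g = v·y⁻¹ (= w·x⁻¹) in ℤ/p, F = (x-1)(y-1), and L = mx + ℓy - 2F. Then {F·g + t·g : 0 ≤ t ≤ L} ⊆ AP(v, ℓ) + AP(w, m). -/
import Mathlib


open Pointwise

def AP {p : ℕ} (v : ZMod p) (ℓ : ℕ) : Set (ZMod p) := {z | ∃ t : ℕ, t ≤ ℓ ∧ z = t • v}

lemma rep (x y ℓ m : ℕ) (hx : 1 < x) (hy : 1 < y) (hxl : x ≤ ℓ) (hym : y ≤ m)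
    (hcop : Nat.gcd x y = 1) (n : ℕ)
    (h1 : (x - 1) * (y - 1) ≤ n) (h2 : n + (x - 1) * (y - 1) ≤ m * x + ℓ * y) :
    ∃ a b : ℕ, a ≤ ℓ ∧ b ≤ m ∧ n = a * y + b * x := by
  haveI : NeZero y := ⟨by omega⟩
  -- cast bounds to ℤ
  have hx1 : ((x - 1 : ℕ) : ℤ) = (x : ℤ) - 1 := by omega
  have hy1 : ((y - 1 : ℕ) : ℤ) = (y : ℤ) - 1 := by omega
  have h1' : ((x : ℤ) - 1) * ((y : ℤ) - 1) ≤ (n : ℤ) := by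
    have := Nat.cast_le (α := ℤ).mpr h1
    rw [Nat.cast_mul, hx1, hy1] at this; exact this
  have h2' : (n : ℤ) + ((x : ℤ) - 1) * ((y : ℤ) - 1) ≤ (m : ℤ) * x + (ℓ : ℤ) * y := by
    have := Nat.cast_le (α := ℤ).mpr h2
    push_cast at this
    rw [hx1, hy1] at this
    linarith
  -- find b₀ < y with b₀ * x ≡ n mod y
  set u : (ZMod y)ˣ := ZMod.unitOfCoprime x hcop with hu
  set b₀ : ℕ := (((u⁻¹ : (ZMod y)ˣ) : ZMod y) * (n : ZMod y)).val with hb₀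
  have hb₀lt : b₀ < y := ZMod.val_lt _
  have hdvd : (y : ℤ) ∣ (n : ℤ) - b₀ * x := by
    rw [← ZMod.intCast_zmod_eq_zero_iff_dvd]
    push_cast
    rw [hb₀, ZMod.natCast_val, ZMod.cast_id]
    have hux : ((u : ZMod y)) = (x : ZMod y) := ZMod.coe_unitOfCoprime x hcop
    have key : ((u⁻¹ : (ZMod y)ˣ) : ZMod y) * (x : ZMod y) = 1 := by
      rw [← hux, ← Units.val_mul, inv_mul_cancel, Units.val_one]
    linear_combination (-(n : ZMod y)) * key
  obtain ⟨a₀, ha₀⟩ := hdvd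
  have hy0 : (0 : ℤ) < y := by positivity
  have hx0 : (0 : ℤ) < x := by positivity
  have hb₀le : (b₀ : ℤ) ≤ (y : ℤ) - 1 := by omega
  have ha₀0 : 0 ≤ a₀ := by
    by_contra hc
    push_neg at hc
    have : a₀ ≤ -1 := by omega
    have h5 : (y : ℤ) * a₀ ≤ (y : ℤ) * (-1) := by
      apply mul_le_mul_of_nonneg_left this (le_of_lt hy0)
    linarith [h5, h1', hb₀le, mul_le_mul_of_nonneg_right hb₀le (le_of_lt hx0)]
  by_cases hcase : a₀ ≤ (ℓ : ℤ)
  · refine ⟨a₀.toNat, b₀, ?_, by omega, ?_⟩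
    · have := Int.toNat_of_nonneg ha₀0; omega
    · have hN : (a₀.toNat : ℤ) = a₀ := Int.toNat_of_nonneg ha₀0
      have : (n : ℤ) = (a₀.toNat : ℤ) * y + (b₀ : ℤ) * x := by rw [hN]; linarith [ha₀]
      exact_mod_cast this
  · push_neg at hcase
    set q : ℤ := (a₀ - ℓ - 1) / x with hq
    have hqr : (x : ℤ) * q + (a₀ - ℓ - 1) % x = a₀ - ℓ - 1 := Int.mul_ediv_add_emod _ _
    have hr0 : 0 ≤ (a₀ - ℓ - 1) % x := Int.emod_nonneg _ (by positivity)
    have hrx : (a₀ - ℓ - 1) % x < x := Int.emod_lt_of_pos _ hx0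
    have hq0 : 0 ≤ q := Int.ediv_nonneg (by omega) (le_of_lt hx0)
    set r : ℤ := (a₀ - ℓ - 1) % x with hr
    set aZ : ℤ := a₀ - (q + 1) * x with haZ
    set bZ : ℤ := (b₀ : ℤ) + (q + 1) * y with hbZ
    have haZval : aZ = (ℓ : ℤ) + 1 + r - x := by rw [haZ]; linarith [hqr]
    have haZ0 : 0 ≤ aZ := by
      rw [haZval]
      have hxlZ : (x : ℤ) ≤ ℓ := by exact_mod_cast hxl
      linarith
    have haZle : aZ ≤ (ℓ : ℤ) := by rw [haZval]; linarith
    have hbZ0 : 0 ≤ bZ := by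
      rw [hbZ]; have : 0 ≤ (q + 1) * y := by positivity
      positivity
    have hsum : aZ * y + bZ * x = n := by rw [haZ, hbZ]; linear_combination -ha₀
    have hbZle : bZ ≤ (m : ℤ) := by
      have hbx : bZ * x = (n : ℤ) - aZ * y := by linarith [hsum]
      have hmx : (x : ℤ) ≤ ℓ := by exact_mod_cast hxl
      have hmy : (y : ℤ) ≤ m := by exact_mod_cast hym
      have hlt : bZ * x < ((m : ℤ) + 1) * x := by
        rw [hbx, haZval]
        linarith [mul_nonneg hr0 (le_of_lt hy0)]
      have := lt_of_mul_lt_mul_right hlt (le_of_lt hx0)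
      omega
    refine ⟨aZ.toNat, bZ.toNat, ?_, ?_, ?_⟩
    · have := Int.toNat_of_nonneg haZ0; omega
    · have := Int.toNat_of_nonneg hbZ0; omega
    · have hNa : (aZ.toNat : ℤ) = aZ := Int.toNat_of_nonneg haZ0
      have hNb : (bZ.toNat : ℤ) = bZ := Int.toNat_of_nonneg hbZ0
      have : (n : ℤ) = (aZ.toNat : ℤ) * y + (bZ.toNat : ℤ) * x := by rw [hNa, hNb]; linarith
      exact_mod_cast this

theorem stmt_3 (p : ℕ) [Fact p.Prime] (v w g : ZMod p) (hv : v ≠ 0) (hw : w ≠ 0)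
    (x y ℓ m : ℕ) (hx : 1 < x) (hy : 1 < y) (hxl : x ≤ ℓ) (hym : y ≤ m)
    (hcop : Nat.gcd x y = 1) (hcol : x • v = y • w)
    (hg : g = v * (y : ZMod p)⁻¹) :
    {z : ZMod p | ∃ t : ℕ, t ≤ m * x + ℓ * y - 2 * ((x - 1) * (y - 1)) ∧
        z = ((x - 1) * (y - 1)) • g + t • g}
      ⊆ AP v ℓ + AP w m := by
  intro z hz
  obtain ⟨t, ht, rfl⟩ := hz
  have hp : p.Prime := Fact.out
  have hxv : (x : ZMod p) * v = (y : ZMod p) * w := by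
    simpa [nsmul_eq_mul] using hcol
  have hyne : (y : ZMod p) ≠ 0 := by
    intro h0
    have hxv0 : (x : ZMod p) * v = 0 := by rw [hxv, h0, zero_mul]
    have hx0 : (x : ZMod p) = 0 := by
      rcases mul_eq_zero.mp hxv0 with h | h
      · exact h
      · exact absurd h hv
    have hpx : p ∣ x := (ZMod.natCast_eq_zero_iff x p).mp hx0
    have hpy : p ∣ y := (ZMod.natCast_eq_zero_iff y p).mp h0
    have : p ∣ 1 := hcop ▸ Nat.dvd_gcd hpx hpy
    exact absurd (Nat.le_of_dvd one_pos this) (by have := hp.two_le; omega)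
  have hgv : (y : ZMod p) * g = v := by
    rw [hg]; field_simp
  have hgw : (x : ZMod p) * g = w := by
    rw [hg]
    field_simp
    linear_combination hxv
  -- arithmetic bounds
  have hFA : (x - 1) * (y - 1) ≤ m * x := by
    calc (x - 1) * (y - 1) ≤ x * m := Nat.mul_le_mul (by omega) (by omega)
    _ = m * x := Nat.mul_comm _ _
  have hFB : (x - 1) * (y - 1) ≤ ℓ * y := Nat.mul_le_mul (by omega) (by omega)
  have h2n : ((x - 1) * (y - 1) + t) + (x - 1) * (y - 1) ≤ m * x + ℓ * y := by
    revert ht hFA hFB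
    generalize (x - 1) * (y - 1) = F
    generalize m * x = A
    generalize ℓ * y = B
    intro ht hFA hFB
    omega
  obtain ⟨a, b, ha, hb, hnab⟩ := rep x y ℓ m hx hy hxl hym hcop
    ((x - 1) * (y - 1) + t) (Nat.le_add_right _ _) h2n
  have hcast : (((x - 1) * (y - 1) : ℕ) : ZMod p) + (t : ZMod p)
      = (a : ZMod p) * (y : ZMod p) + (b : ZMod p) * (x : ZMod p) := by
    exact_mod_cast congrArg (Nat.cast : ℕ → ZMod p) hnab
  have heq : ((x - 1) * (y - 1)) • g + t • g = a • v + b • w := by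
    simp only [nsmul_eq_mul]
    linear_combination g * hcast + (a : ZMod p) * hgv + (b : ZMod p) * hgw
  rw [heq]
  exact Set.add_mem_add ⟨a, ha, rfl⟩ ⟨b, hb, rfl⟩
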